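/- The synergy value χ is the unique measure of synergy satisfying all of the following five properties. (P5, Symmetric-Synergy): for every game (N,v), every pair of symmetric players i,j in (N,v), and every coalition C ⊆ N\{i,j}, ψ^N_v(C∪{i}) = ψ^N_v(C∪{j}). (P6, Null-Synergy): for every game (N,v) and every null player i in (N,v), ψ^N_v(C) = ψ^N_v(C∪{i}) for all C ⊆ N. (P7, Dummy-Synergy): for every game (N,v), the game (N, v − ψ^N_v) is a game of dummies. (P8, Normalized-Synergy): for every game (N,v), Σ_{C⊆N} ψ^N_v(C) = 0. (P9, Additive-Synergy): for every pair of games (N,v) and (N,w) on the same player set, and every coalition C ⊆ N, ψ^N_v(C) + ψ^N_w(C) = ψ^N_{v+w}(C). That is: χ satisfies P5–P9, and any measure of synergy ψ satisfying P5–P9 equals χ on every game and every coalition. -/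

import Mathlib

open Finset

/-- The marginal contribution of player `i` to coalition `C` in a game with
characteristic function `v`: `MC^C_i(N,v) = v(C ∪ {i}) − v(C)`. -/
noncomputable def MC (v : Finset ℕ → ℝ) (C : Finset ℕ) (i : ℕ) : ℝ :=
  v (insert i C) - v C

/-- The Shapley value of player `i` in the game with player set `N` and
characteristic function `v`. -/
noncomputable def shapley (N : Finset ℕ) (v : Finset ℕ → ℝ) (i : ℕ) : ℝ :=
  ∑ C ∈ (N.erase i).powerset,
    ((C.card.factorial : ℝ) * ((N.card - C.card - 1).factorial : ℝ) /
      (N.card.factorial : ℝ)) * (v (insert i C) - v C)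

/-- The average Shapley value `φ̄_i(N,v) = 2^{1−n} Σ_{C ⊆ N, i ∈ C} φ_i(C,v)`. -/
noncomputable def avgShapley (N : Finset ℕ) (v : Finset ℕ → ℝ) (i : ℕ) : ℝ :=
  (2 / 2 ^ N.card : ℝ) * ∑ C ∈ N.powerset.filter (fun C => i ∈ C), shapley C v i

/-- The synergy value `χ^N_v(C) = v(C) − Σ_{i ∈ C} φ̄_i(N,v)`. -/
noncomputable def synergyValue (N : Finset ℕ) (v : Finset ℕ → ℝ) (C : Finset ℕ) : ℝ :=
  v C - ∑ i ∈ C, avgShapley N v i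

/-- Players `i` and `j` are symmetric in the game `(N,v)`. -/
def IsSymmetric (N : Finset ℕ) (v : Finset ℕ → ℝ) (i j : ℕ) : Prop :=
  i ∈ N ∧ j ∈ N ∧ ∀ C ⊆ N \ {i, j}, v (insert i C) = v (insert j C)

/-- Player `i` is a null player in the game `(N,v)`. -/
def IsNullPlayer (N : Finset ℕ) (v : Finset ℕ → ℝ) (i : ℕ) : Prop :=
  i ∈ N ∧ ∀ C ⊆ N, v (insert i C) = v C

/-- Player `i` is a dummy player in the game `(N,v)`. -/
def IsDummyPlayer (N : Finset ℕ) (v : Finset ℕ → ℝ) (i : ℕ) : Prop :=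
  i ∈ N ∧ ∀ C ⊆ N \ {i}, v (insert i C) = v C + v {i}

/-- A game of dummies: every player is a dummy player. -/
def GameOfDummies (N : Finset ℕ) (v : Finset ℕ → ℝ) : Prop :=
  ∀ i ∈ N, IsDummyPlayer N v i

/-- A measure of synergy assigns to every game a real value for each coalition,
with zero synergy for the empty coalition. -/
def IsSynergyMeasure (ψ : Finset ℕ → (Finset ℕ → ℝ) → Finset ℕ → ℝ) : Prop :=
  ∀ (N : Finset ℕ) (v : Finset ℕ → ℝ), v ∅ = 0 → ψ N v ∅ = 0

/-- P5 (Symmetric-Synergy). -/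
def SymmetricSynergy (ψ : Finset ℕ → (Finset ℕ → ℝ) → Finset ℕ → ℝ) : Prop :=
  ∀ (N : Finset ℕ) (v : Finset ℕ → ℝ), v ∅ = 0 → ∀ i j : ℕ, IsSymmetric N v i j →
    ∀ C ⊆ N \ {i, j}, ψ N v (insert i C) = ψ N v (insert j C)

/-- P6 (Null-Synergy). -/
def NullSynergy (ψ : Finset ℕ → (Finset ℕ → ℝ) → Finset ℕ → ℝ) : Prop :=
  ∀ (N : Finset ℕ) (v : Finset ℕ → ℝ), v ∅ = 0 → ∀ i : ℕ, IsNullPlayer N v i →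
    ∀ C ⊆ N, ψ N v C = ψ N v (insert i C)

/-- P7 (Dummy-Synergy). -/
def DummySynergy (ψ : Finset ℕ → (Finset ℕ → ℝ) → Finset ℕ → ℝ) : Prop :=
  ∀ (N : Finset ℕ) (v : Finset ℕ → ℝ), v ∅ = 0 →
    GameOfDummies N (fun C => v C - ψ N v C)

/-- P8 (Normalized-Synergy). -/
def NormalizedSynergy (ψ : Finset ℕ → (Finset ℕ → ℝ) → Finset ℕ → ℝ) : Prop :=
  ∀ (N : Finset ℕ) (v : Finset ℕ → ℝ), v ∅ = 0 → ∑ C ∈ N.powerset, ψ N v C = 0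

/-- P9 (Additive-Synergy). -/
def AdditiveSynergy (ψ : Finset ℕ → (Finset ℕ → ℝ) → Finset ℕ → ℝ) : Prop :=
  ∀ (N : Finset ℕ) (v w : Finset ℕ → ℝ), v ∅ = 0 → w ∅ = 0 →
    ∀ C ⊆ N, ψ N v C + ψ N w C = ψ N (fun S => v S + w S) C

/-- P10 (Marginal-Synergy). -/
def MarginalSynergy (ψ : Finset ℕ → (Finset ℕ → ℝ) → Finset ℕ → ℝ) : Prop :=
  ∀ (N : Finset ℕ) (v w : Finset ℕ → ℝ), v ∅ = 0 → w ∅ = 0 → ∀ C ⊆ N,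
    (∀ i ∈ C, ∀ S ⊆ N \ {i}, MC v S i = MC w S i) → ψ N v C = ψ N w C




lemma filter_mem_powerset_card (N : Finset ℕ) (i : ℕ) (hi : i ∈ N) :
    (N.powerset.filter (fun C => i ∈ C)).card = 2 ^ (N.card - 1) := by
  have himg : N.powerset.filter (fun C => i ∈ C) = (N.erase i).powerset.image (insert i) := by
    ext C
    simp only [mem_filter, mem_powerset, mem_image]
    constructor
    · rintro ⟨hCN, hiC⟩
      exact ⟨C.erase i, erase_subset_erase i hCN, insert_erase hiC⟩
    · rintro ⟨S, hS, rfl⟩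
      exact ⟨insert_subset hi (hS.trans (erase_subset i N)), mem_insert_self i S⟩
  rw [himg, card_image_of_injOn, card_powerset, card_erase_of_mem hi]
  intro S hS S' hS' h
  simp only [coe_powerset, Set.mem_preimage, Set.mem_powerset_iff, coe_subset, mem_coe,
    mem_powerset] at hS hS'
  have hiS : i ∉ S := fun hiS => (mem_erase.1 (hS hiS)).1 rfl
  have hiS' : i ∉ S' := fun hiS' => (mem_erase.1 (hS' hiS')).1 rfl
  rw [← erase_insert hiS, ← erase_insert hiS', h]


lemma shapley_eff (C : Finset ℕ) (v : Finset ℕ → ℝ) :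
    ∑ i ∈ C, shapley C v i = v C - v ∅ := by
  rcases C.eq_empty_or_nonempty with rfl | hC
  · simp [shapley]
  set c := C.card with hc
  have hc1 : 1 ≤ c := card_pos.2 hC
  set W : ℕ → ℝ := fun s => (s.factorial : ℝ) * ((c - s - 1).factorial : ℝ) / (c.factorial : ℝ)
    with hW
  have hsplit : ∑ i ∈ C, shapley C v i
      = (∑ i ∈ C, ∑ S ∈ (C.erase i).powerset, W S.card * v (insert i S))
      - (∑ i ∈ C, ∑ S ∈ (C.erase i).powerset, W S.card * v S) := by
    rw [← sum_sub_distrib]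
    refine sum_congr rfl fun i _ => ?_
    rw [← sum_sub_distrib]
    exact sum_congr rfl fun S _ => by rw [hW]; ring
  have hP : ∑ i ∈ C, ∑ S ∈ (C.erase i).powerset, W S.card * v (insert i S)
      = ∑ T ∈ C.powerset, ∑ i ∈ T, W ((T.erase i).card) * v T := by
    rw [sum_sigma', sum_sigma']
    refine sum_nbij' (fun p => ⟨insert p.1 p.2, p.1⟩) (fun p => ⟨p.2, p.1.erase p.2⟩)
      ?_ ?_ ?_ ?_ ?_
    · rintro ⟨i, S⟩ hp
      simp only [mem_sigma, mem_powerset] at hp ⊢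
      exact ⟨insert_subset hp.1 (hp.2.trans (erase_subset i C)), mem_insert_self _ _⟩
    · rintro ⟨T, i⟩ hp
      simp only [mem_sigma, mem_powerset] at hp ⊢
      exact ⟨hp.1 hp.2, erase_subset_erase i hp.1⟩
    · rintro ⟨i, S⟩ hp
      simp only [mem_sigma, mem_powerset] at hp
      have hiS : i ∉ S := fun h => (mem_erase.1 (hp.2 h)).1 rfl
      simp [erase_insert hiS]
    · rintro ⟨T, i⟩ hp
      simp only [mem_sigma, mem_powerset] at hp
      simp [insert_erase hp.2]
    · rintro ⟨i, S⟩ hp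
      simp only [mem_sigma, mem_powerset] at hp
      have hiS : i ∉ S := fun h => (mem_erase.1 (hp.2 h)).1 rfl
      simp [erase_insert hiS]
  have hP2 : ∑ T ∈ C.powerset, ∑ i ∈ T, W ((T.erase i).card) * v T
      = ∑ T ∈ C.powerset, (T.card : ℝ) * (W (T.card - 1) * v T) := by
    refine sum_congr rfl fun T _ => ?_
    rw [sum_congr rfl (fun i hi => by rw [card_erase_of_mem hi]), sum_const, nsmul_eq_mul]
  have hQ : ∑ i ∈ C, ∑ S ∈ (C.erase i).powerset, W S.card * v S
      = ∑ T ∈ C.powerset, ((c - T.card : ℕ) : ℝ) * (W T.card * v T) := by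
    rw [sum_comm' (s' := fun S => C \ S) (t' := C.powerset)
      (fun i S => by simp only [mem_powerset, mem_sdiff, subset_erase]; tauto)]
    refine sum_congr rfl fun T hT => ?_
    rw [sum_const, card_sdiff_of_subset (mem_powerset.1 hT), nsmul_eq_mul]
  have hcoef : ∀ T ∈ C.powerset,
      (T.card : ℝ) * W (T.card - 1) - ((c - T.card : ℕ) : ℝ) * W T.card
        = (if T = C then 1 else 0) - (if T = ∅ then 1 else 0) := by
    intro T hT
    rw [mem_powerset] at hT
    have htc : T.card ≤ c := card_le_card hT
    have hcf : (c.factorial : ℝ) ≠ 0 := Nat.cast_ne_zero.2 c.factorial_ne_zero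
    have key : (c : ℝ) * ((c - 1).factorial : ℝ) = (c.factorial : ℝ) := by
      exact_mod_cast Nat.mul_factorial_pred (by omega : c ≠ 0)
    rcases eq_or_ne T ∅ with rfl | hTne
    · rw [if_neg (fun h => hC.ne_empty h.symm), if_pos rfl]
      simp only [card_empty, Nat.cast_zero, zero_mul, Nat.sub_zero, Nat.zero_sub,
        Nat.factorial_zero, Nat.cast_one, one_mul, hW, zero_sub]
      field_simp
      linarith [key]
    · have ht1 : 1 ≤ T.card := card_pos.2 (nonempty_iff_ne_empty.2 hTne)
      rcases eq_or_ne T C with rfl | hTC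
      · rw [if_pos rfl, if_neg hTne]
        have h0 : c - (c - 1) - 1 = 0 := by omega
        have hcc : c - c = 0 := by omega
        rw [hW]
        simp only [← hc, h0, hcc, Nat.factorial_zero, Nat.cast_one, mul_one, Nat.cast_zero,
          zero_mul, sub_zero, sub_zero]
        field_simp
        linarith [key]
      · have htlt : T.card < c := card_lt_card (ssubset_of_subset_of_ne hT hTC)
        rw [if_neg hTC, if_neg hTne, sub_self]
        have he : c - (T.card - 1) - 1 = c - T.card := by omega
        have k1 : (T.card : ℝ) * ((T.card - 1).factorial : ℝ) = (T.card.factorial : ℝ) := by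
          exact_mod_cast Nat.mul_factorial_pred (by omega : T.card ≠ 0)
        have k2 : ((c - T.card : ℕ) : ℝ) * (((c - T.card - 1).factorial : ℝ))
            = ((c - T.card).factorial : ℝ) := by
          exact_mod_cast Nat.mul_factorial_pred (by omega : c - T.card ≠ 0)
        simp only [hW]
        rw [he, sub_eq_zero, ← mul_div_assoc, ← mul_div_assoc, div_eq_div_iff hcf hcf]
        linear_combination (((c - T.card).factorial : ℝ) * (c.factorial : ℝ)) * k1
          - ((T.card.factorial : ℝ) * (c.factorial : ℝ)) * k2
  calc ∑ i ∈ C, shapley C v i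
      = ∑ T ∈ C.powerset, (((T.card : ℝ) * W (T.card - 1)
          - ((c - T.card : ℕ) : ℝ) * W T.card) * v T) := by
        rw [hsplit, hP, hP2, hQ, ← sum_sub_distrib]
        exact sum_congr rfl fun T _ => by ring
    _ = ∑ T ∈ C.powerset, (((if T = C then (1:ℝ) else 0) - (if T = ∅ then 1 else 0)) * v T) :=
        sum_congr rfl fun T hT => by rw [hcoef T hT]
    _ = v C - v ∅ := by
        rw [sum_congr rfl (fun T _ => by rw [sub_mul]), sum_sub_distrib]
        simp only [ite_mul, one_mul, zero_mul, sum_ite_eq', mem_powerset_self,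
          empty_mem_powerset, if_pos]


lemma subset_sdiff_pair {C N : Finset ℕ} {i j : ℕ} (hCN : C ⊆ N) (hi : i ∉ C) (hj : j ∉ C) :
    C ⊆ N \ {i, j} := by
  refine subset_sdiff.2 ⟨hCN, ?_⟩
  rw [disjoint_left]
  intro a ha
  simp only [mem_insert, mem_singleton]
  rintro (rfl | rfl) <;> [exact hi ha; exact hj ha]

lemma shapley_null {N : Finset ℕ} {v : Finset ℕ → ℝ} {i : ℕ}
    (hnull : ∀ C ⊆ N, v (insert i C) = v C) {S : Finset ℕ} (hSN : S ⊆ N) :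
    shapley S v i = 0 := by
  refine sum_eq_zero fun C hC => ?_
  rw [hnull C (((mem_powerset.1 hC).trans (erase_subset i S)).trans hSN)]
  ring

lemma avgShapley_null {N : Finset ℕ} {v : Finset ℕ → ℝ} {i : ℕ}
    (hnull : ∀ C ⊆ N, v (insert i C) = v C) :
    avgShapley N v i = 0 := by
  unfold avgShapley
  rw [sum_eq_zero fun C hC => shapley_null hnull (mem_powerset.1 (mem_filter.1 hC).1), mul_zero]

lemma shapley_symm_of_mem {N : Finset ℕ} {v : Finset ℕ → ℝ} {i j : ℕ} (hij : i ≠ j)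
    (hsym : ∀ C ⊆ N \ {i, j}, v (insert i C) = v (insert j C))
    {S : Finset ℕ} (hSN : S ⊆ N) (hi : i ∈ S) (hj : j ∈ S) :
    shapley S v i = shapley S v j := by
  unfold shapley
  refine sum_nbij' (fun C => if j ∈ C then insert i (C.erase j) else C)
    (fun C => if i ∈ C then insert j (C.erase i) else C) ?_ ?_ ?_ ?_ ?_
  · intro C hC
    rw [mem_powerset] at hC ⊢
    have hCS : C ⊆ S := hC.trans (erase_subset i S)
    split_ifs with hjC
    · exact insert_subset (mem_erase.2 ⟨hij, hi⟩) ((erase_subset_erase j hCS))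
    · exact subset_erase.2 ⟨hCS, hjC⟩
  · intro C hC
    rw [mem_powerset] at hC ⊢
    have hCS : C ⊆ S := hC.trans (erase_subset j S)
    split_ifs with hiC
    · exact insert_subset (mem_erase.2 ⟨hij.symm, hj⟩) ((erase_subset_erase i hCS))
    · exact subset_erase.2 ⟨hCS, hiC⟩
  · intro C hC
    have hiC : i ∉ C := fun h => (mem_erase.1 ((mem_powerset.1 hC) h)).1 rfl
    by_cases hjC : j ∈ C
    · rw [if_pos hjC, if_pos (mem_insert_self i _),
        erase_insert (fun h => hiC (mem_of_mem_erase h)), insert_erase hjC]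
    · rw [if_neg hjC, if_neg hiC]
  · intro C hC
    have hjC : j ∉ C := fun h => (mem_erase.1 ((mem_powerset.1 hC) h)).1 rfl
    by_cases hiC : i ∈ C
    · rw [if_pos hiC, if_pos (mem_insert_self j _),
        erase_insert (fun h => hjC (mem_of_mem_erase h)), insert_erase hiC]
    · rw [if_neg hiC, if_neg hjC]
  · intro C hC
    rw [mem_powerset] at hC
    have hiC : i ∉ C := fun h => (mem_erase.1 (hC h)).1 rfl
    have hCS : C ⊆ S := hC.trans (erase_subset i S)
    by_cases hjC : j ∈ C
    · rw [if_pos hjC]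
      have hiD : i ∉ C.erase j := fun h => hiC (mem_of_mem_erase h)
      have hjD : j ∉ C.erase j := notMem_erase j C
      have hDsub : C.erase j ⊆ N \ {i, j} :=
        subset_sdiff_pair (((erase_subset j C).trans hCS).trans hSN) hiD hjD
      have hcard : (insert i (C.erase j)).card = C.card := by
        rw [card_insert_of_notMem hiD, card_erase_add_one hjC]
      rw [hcard]
      have h1 : insert j (insert i (C.erase j)) = insert i C := by
        rw [Finset.insert_comm, insert_erase hjC]
      have h2 : v (insert i (C.erase j)) = v C := by
        rw [hsym (C.erase j) hDsub, insert_erase hjC]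
      rw [h1, h2]
    · rw [if_neg hjC]
      rw [hsym C (subset_sdiff_pair (hCS.trans hSN) hiC hjC)]

lemma shapley_swap {N : Finset ℕ} {v : Finset ℕ → ℝ} {i j : ℕ} (hij : i ≠ j)
    (hsym : ∀ C ⊆ N \ {i, j}, v (insert i C) = v (insert j C))
    {S : Finset ℕ} (hSN : S ⊆ N) (hi : i ∈ S) (hj : j ∉ S) :
    shapley S v i = shapley (insert j (S.erase i)) v j := by
  have hjSe : j ∉ S.erase i := fun h => hj (mem_of_mem_erase h)
  have hfix : (insert j (S.erase i)).erase j = S.erase i := erase_insert hjSe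
  have hcard : (insert j (S.erase i)).card = S.card := by
    rw [card_insert_of_notMem hjSe, card_erase_add_one hi]
  unfold shapley
  rw [hfix, hcard]
  refine sum_congr rfl fun C hC => ?_
  have hC' := mem_powerset.1 hC
  have hiC : i ∉ C := fun h => (mem_erase.1 (hC' h)).1 rfl
  have hjC : j ∉ C := fun h => hj ((erase_subset i S) (hC' h))
  rw [hsym C (subset_sdiff_pair ((hC'.trans (erase_subset i S)).trans hSN) hiC hjC)]

lemma avgShapley_symm {N : Finset ℕ} {v : Finset ℕ → ℝ} {i j : ℕ}
    (hiN : i ∈ N) (hjN : j ∈ N)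
    (hsym : ∀ C ⊆ N \ {i, j}, v (insert i C) = v (insert j C)) :
    avgShapley N v i = avgShapley N v j := by
  rcases eq_or_ne i j with rfl | hij
  · rfl
  unfold avgShapley
  congr 1
  refine sum_nbij' (fun S => if j ∈ S then S else insert j (S.erase i))
    (fun S => if i ∈ S then S else insert i (S.erase j)) ?_ ?_ ?_ ?_ ?_
  · intro S hS
    rw [mem_filter, mem_powerset] at hS ⊢
    split_ifs with hjS
    · exact ⟨hS.1, hjS⟩
    · exact ⟨insert_subset hjN ((erase_subset i S).trans hS.1), mem_insert_self j _⟩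
  · intro S hS
    rw [mem_filter, mem_powerset] at hS ⊢
    split_ifs with hiS
    · exact ⟨hS.1, hiS⟩
    · exact ⟨insert_subset hiN ((erase_subset j S).trans hS.1), mem_insert_self i _⟩
  · intro S hS
    rw [mem_filter, mem_powerset] at hS
    by_cases hjS : j ∈ S
    · rw [if_pos hjS, if_pos hS.2]
    · rw [if_neg hjS]
      have hiIns : i ∉ insert j (S.erase i) := by
        simp only [mem_insert]
        rintro (rfl | h)
        · exact hij rfl
        · exact (mem_erase.1 h).1 rfl
      rw [if_neg hiIns, erase_insert (fun h => hjS (mem_of_mem_erase h)), insert_erase hS.2]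
  · intro S hS
    rw [mem_filter, mem_powerset] at hS
    by_cases hiS : i ∈ S
    · rw [if_pos hiS, if_pos hS.2]
    · rw [if_neg hiS]
      have hjIns : j ∉ insert i (S.erase j) := by
        simp only [mem_insert]
        rintro (rfl | h)
        · exact hij rfl
        · exact (mem_erase.1 h).1 rfl
      rw [if_neg hjIns, erase_insert (fun h => hiS (mem_of_mem_erase h)), insert_erase hS.2]
  · intro S hS
    rw [mem_filter, mem_powerset] at hS
    by_cases hjS : j ∈ S
    · rw [if_pos hjS]
      exact shapley_symm_of_mem hij hsym hS.1 hS.2 hjS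
    · rw [if_neg hjS]
      exact shapley_swap hij hsym hS.1 hS.2 hjS

lemma mobius_inversion (v : Finset ℕ → ℝ) (S : Finset ℕ) :
    ∑ T ∈ S.powerset, ∑ R ∈ T.powerset, (-1:ℝ)^(T.card - R.card) * v R = v S := by
  rw [sum_comm' (t' := S.powerset) (s' := fun R => S.powerset.filter (fun T => R ⊆ T))
    (fun T R => by
      simp only [mem_powerset, mem_filter]
      constructor
      · rintro ⟨h1, h2⟩; exact ⟨⟨h1, h2⟩, h2.trans h1⟩
      · rintro ⟨⟨h1, h2⟩, _⟩; exact ⟨h1, h2⟩)]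
  have hinner : ∀ R ∈ S.powerset,
      ∑ T ∈ S.powerset.filter (fun T => R ⊆ T), (-1:ℝ)^(T.card - R.card)
        = if R = S then 1 else 0 := by
    intro R hR
    rw [mem_powerset] at hR
    have h1 : ∑ T ∈ S.powerset.filter (fun T => R ⊆ T), (-1:ℝ)^(T.card - R.card)
        = ∑ U ∈ (S \ R).powerset, (-1:ℝ)^U.card := by
      refine sum_nbij' (fun T => T \ R) (fun U => R ∪ U) ?_ ?_ ?_ ?_ ?_
      · intro T hT
        rw [mem_filter, mem_powerset] at hT
        exact mem_powerset.2 (sdiff_subset_sdiff hT.1 (Subset.refl R))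
      · intro U hU
        rw [mem_powerset] at hU
        exact mem_filter.2 ⟨mem_powerset.2 (union_subset hR (hU.trans sdiff_subset)),
          subset_union_left⟩
      · intro T hT
        rw [mem_filter] at hT
        exact union_sdiff_of_subset hT.2
      · intro U hU
        rw [mem_powerset] at hU
        have hdisj : Disjoint R U := by
          rw [disjoint_right]
          exact fun a haU => (mem_sdiff.1 (hU haU)).2
        exact union_sdiff_cancel_left hdisj
      · intro T hT
        rw [mem_filter] at hT
        rw [card_sdiff_of_subset hT.2]
    rw [h1]
    have hz := Finset.sum_powerset_neg_one_pow_card (x := S \ R)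
    have hz' : ∑ U ∈ (S \ R).powerset, (-1:ℝ)^U.card
        = if S \ R = ∅ then 1 else 0 := by
      exact_mod_cast congrArg (fun z : ℤ => (z : ℝ)) hz
    rw [hz']
    rcases eq_or_ne R S with rfl | hne
    · rw [if_pos (sdiff_eq_empty_iff_subset.2 (Subset.refl R)), if_pos rfl]
    · rw [if_neg (fun h => hne (Subset.antisymm hR (sdiff_eq_empty_iff_subset.1 h))),
        if_neg hne]
  calc ∑ R ∈ S.powerset, ∑ T ∈ S.powerset.filter (fun T => R ⊆ T), (-1:ℝ)^(T.card - R.card) * v R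
      = ∑ R ∈ S.powerset, (if R = S then 1 else 0) * v R := by
        refine sum_congr rfl fun R hR => ?_
        rw [← sum_mul, hinner R hR]
    _ = v S := by
        simp only [ite_mul, one_mul, zero_mul, sum_ite_eq', mem_powerset_self, if_pos]

lemma sum_powerset_inter_card (N T : Finset ℕ) (hT : T ⊆ N) :
    ∑ C ∈ N.powerset, ((C ∩ T).card : ℝ) = (T.card : ℝ) * 2 ^ (N.card - 1) := by
  have h1 : ∀ C : Finset ℕ, ((C ∩ T).card : ℝ) = ∑ j ∈ T, (if j ∈ C then (1:ℝ) else 0) := by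
    intro C
    rw [inter_comm, ← filter_mem_eq_inter]
    rw [card_filter]
    push_cast
    rfl
  rw [sum_congr rfl fun C _ => h1 C, sum_comm]
  have h2 : ∀ j ∈ T, ∑ C ∈ N.powerset, (if j ∈ C then (1:ℝ) else 0)
      = (2:ℝ) ^ (N.card - 1) := by
    intro j hj
    rw [sum_ite, sum_const, sum_const, smul_zero, add_zero, nsmul_eq_mul, mul_one,
      filter_mem_powerset_card N j (hT hj)]
    push_cast
    ring
  rw [sum_congr rfl h2, sum_const, nsmul_eq_mul]

lemma avgShapley_total (N : Finset ℕ) (v : Finset ℕ → ℝ) (hv : v ∅ = 0) :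
    ∑ i ∈ N, avgShapley N v i = (2 / 2 ^ N.card : ℝ) * ∑ C ∈ N.powerset, v C := by
  unfold avgShapley
  rw [← mul_sum]
  congr 1
  rw [sum_comm' (t' := N.powerset) (s' := fun C => C) (fun i C => by
    simp only [mem_filter, mem_powerset]
    constructor
    · rintro ⟨h1, h2, h3⟩; exact ⟨h3, h2⟩
    · rintro ⟨h1, h2⟩; exact ⟨h2 h1, h2, h1⟩)]
  refine sum_congr rfl fun C _ => ?_
  rw [shapley_eff C v, hv, sub_zero]

lemma chi_measure : IsSynergyMeasure synergyValue := fun N v hv => by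
  simp [synergyValue, hv]

lemma chi_symmetric : SymmetricSynergy synergyValue := by
  intro N v hv i j hsym C hC
  obtain ⟨hiN, hjN, hs⟩ := hsym
  rcases eq_or_ne i j with rfl | hij
  · rfl
  have hiC : i ∉ C := fun h => by
    have := mem_sdiff.1 (hC h)
    exact this.2 (mem_insert_self i {j})
  have hjC : j ∉ C := fun h => by
    have := mem_sdiff.1 (hC h)
    exact this.2 (mem_insert_of_mem (mem_singleton_self j))
  unfold synergyValue
  rw [hs C hC, sum_insert hiC, sum_insert hjC, avgShapley_symm hiN hjN hs]

lemma chi_null : NullSynergy synergyValue := by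
  intro N v hv i hnull C hCN
  obtain ⟨hiN, hn⟩ := hnull
  by_cases hiC : i ∈ C
  · rw [insert_eq_self.2 hiC]
  · unfold synergyValue
    rw [hn C hCN, sum_insert hiC, avgShapley_null hn]
    ring

lemma chi_dummy : DummySynergy synergyValue := by
  intro N v hv i hiN
  refine ⟨hiN, fun C hC => ?_⟩
  have hiC : i ∉ C := fun h => by
    have := mem_sdiff.1 (hC h)
    exact this.2 (mem_singleton_self i)
  simp only [synergyValue]
  rw [sum_insert hiC, sum_singleton]
  ring

lemma chi_additive : AdditiveSynergy synergyValue := by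
  intro N v w hv hw C hC
  have hsh : ∀ (S : Finset ℕ) (i : ℕ),
      shapley S (fun S => v S + w S) i = shapley S v i + shapley S w i := by
    intro S i
    unfold shapley
    rw [← sum_add_distrib]
    exact sum_congr rfl fun C _ => by ring
  have hav : ∀ i, avgShapley N (fun S => v S + w S) i = avgShapley N v i + avgShapley N w i := by
    intro i
    unfold avgShapley
    rw [sum_congr rfl fun C _ => hsh C i, sum_add_distrib]
    ring
  unfold synergyValue
  rw [sum_congr rfl fun i _ => hav i, sum_add_distrib]
  ring

lemma chi_normalized : NormalizedSynergy synergyValue := by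
  intro N v hv
  rcases N.eq_empty_or_nonempty with rfl | hN
  · simp [synergyValue, hv]
  unfold synergyValue
  rw [sum_sub_distrib]
  have h1 : ∑ C ∈ N.powerset, ∑ i ∈ C, avgShapley N v i
      = ∑ i ∈ N, ((2:ℝ) ^ (N.card - 1)) * avgShapley N v i := by
    rw [sum_comm' (t' := N) (s' := fun i => N.powerset.filter (fun C => i ∈ C)) (fun C i => by
      simp only [mem_powerset, mem_filter]
      constructor
      · rintro ⟨h1, h2⟩; exact ⟨⟨h1, h2⟩, h1 h2⟩
      · rintro ⟨⟨h1, h2⟩, _⟩; exact ⟨h1, h2⟩)]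
    refine sum_congr rfl fun i hi => ?_
    rw [sum_const, filter_mem_powerset_card N i hi, nsmul_eq_mul]
    push_cast
    ring
  rw [h1, ← mul_sum, avgShapley_total N v hv]
  have hpow : (2:ℝ)^(N.card - 1) * (2 / 2^N.card) = 1 := by
    obtain ⟨m, hm⟩ : ∃ m, N.card = m + 1 := ⟨N.card - 1, by
      have := card_pos.2 hN; omega⟩
    rw [hm]
    simp only [Nat.add_sub_cancel, pow_succ]
    have : (2:ℝ)^m ≠ 0 := pow_ne_zero m two_ne_zero
    field_simp
  linear_combination (-(∑ C ∈ N.powerset, v C)) * hpow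

/-- The scaled unanimity game. -/
noncomputable def uGame (T : Finset ℕ) (c : ℝ) : Finset ℕ → ℝ := fun S => if T ⊆ S then c else 0

lemma uGame_empty {T : Finset ℕ} (hTne : T.Nonempty) (c : ℝ) : uGame T c ∅ = 0 :=
  if_neg fun h => hTne.ne_empty (subset_empty.1 h)

lemma psi_zero_game {ψ : Finset ℕ → (Finset ℕ → ℝ) → Finset ℕ → ℝ}
    (hM : IsSynergyMeasure ψ) (h6 : NullSynergy ψ)
    (N : Finset ℕ) (w : Finset ℕ → ℝ) (hw : ∀ S ⊆ N, w S = 0) :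
    ∀ C ⊆ N, ψ N w C = 0 := by
  have hw0 : w ∅ = 0 := hw ∅ (empty_subset N)
  intro C
  induction C using Finset.induction_on with
  | empty => exact fun _ => hM N w hw0
  | @insert a C ha ih =>
    intro hins
    have haN : a ∈ N := hins (mem_insert_self a C)
    have hCN : C ⊆ N := (subset_insert a C).trans hins
    have hnull : IsNullPlayer N w a :=
      ⟨haN, fun S hS => by rw [hw _ (insert_subset haN hS), hw _ hS]⟩
    rw [← h6 N w hw0 a hnull C hCN]
    exact ih hCN

lemma psi_sum_family {ψ : Finset ℕ → (Finset ℕ → ℝ) → Finset ℕ → ℝ}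
    (hM : IsSynergyMeasure ψ) (h9 : AdditiveSynergy ψ)
    (N : Finset ℕ) (A : Finset (Finset ℕ)) (g : Finset ℕ → Finset ℕ → ℝ) :
    (∀ T ∈ A, g T ∅ = 0) → ∀ C ⊆ N,
      ψ N (fun S => ∑ T ∈ A, g T S) C = ∑ T ∈ A, ψ N (g T) C := by
  induction A using Finset.induction_on with
  | empty =>
    intro _ C hC
    simp only [sum_empty]
    have h0 := h9 N (fun _ => 0) (fun _ => 0) rfl rfl C hC
    simp only [add_zero] at h0
    linarith
  | @insert a A ha ih =>
    intro hg C hC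
    have hg' : ∀ T ∈ A, g T ∅ = 0 := fun T hT => hg T (mem_insert_of_mem hT)
    have hsum0 : (fun S => ∑ T ∈ A, g T S) ∅ = 0 := sum_eq_zero hg'
    have hfun : (fun S => ∑ T ∈ insert a A, g T S) = (fun S => g a S + ∑ T ∈ A, g T S) :=
      funext fun S => sum_insert ha
    have h0 := h9 N (g a) (fun S => ∑ T ∈ A, g T S) (hg a (mem_insert_self a A)) hsum0 C hC
    rw [hfun, sum_insert ha, ← ih hg' C hC]
    linarith

lemma psi_delta_sum {ψ ψ' : Finset ℕ → (Finset ℕ → ℝ) → Finset ℕ → ℝ}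
    (hM : IsSynergyMeasure ψ) (hM' : IsSynergyMeasure ψ')
    (h7 : DummySynergy ψ) (h7' : DummySynergy ψ')
    (N : Finset ℕ) (w : Finset ℕ → ℝ) (hw : w ∅ = 0) :
    ∀ C ⊆ N, ψ N w C - ψ' N w C = ∑ j ∈ C, (ψ N w {j} - ψ' N w {j}) := by
  intro C
  induction C using Finset.induction_on with
  | empty => intro _; simp [hM N w hw, hM' N w hw]
  | @insert a C ha ih =>
    intro hins
    have haN : a ∈ N := hins (mem_insert_self a C)
    have hCN : C ⊆ N := (subset_insert a C).trans hins
    have hCNa : C ⊆ N \ {a} := subset_sdiff.2 ⟨hCN, disjoint_singleton_right.2 ha⟩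
    have hd := ((h7 N w hw) a haN).2 C hCNa
    have hd' := ((h7' N w hw) a haN).2 C hCNa
    dsimp only at hd hd'
    rw [sum_insert ha, ← ih hCN]
    linarith

lemma uGame_singleton_symm {θ : Finset ℕ → (Finset ℕ → ℝ) → Finset ℕ → ℝ}
    (h5 : SymmetricSynergy θ) {N T : Finset ℕ} (hT : T ⊆ N) (c : ℝ) {i j : ℕ}
    (hi : i ∈ T) (hj : j ∈ T) :
    θ N (uGame T c) {j} = θ N (uGame T c) {i} := by
  rcases eq_or_ne j i with rfl | hij
  · rfl
  have hw0 : uGame T c ∅ = 0 := uGame_empty ⟨i, hi⟩ c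
  have hsympair : IsSymmetric N (uGame T c) j i := by
    refine ⟨hT hj, hT hi, fun C hC => ?_⟩
    have hiC : i ∉ C := fun h => (mem_sdiff.1 (hC h)).2 (mem_insert_of_mem (mem_singleton_self i))
    have hjC : j ∉ C := fun h => (mem_sdiff.1 (hC h)).2 (mem_insert_self j {i})
    unfold uGame
    rw [if_neg, if_neg]
    · intro h
      rcases mem_insert.1 (h hj) with h' | h'
      · exact hij h'
      · exact hjC h'
    · intro h
      rcases mem_insert.1 (h hi) with h' | h'
      · exact hij h'.symm
      · exact hiC h'
  have := h5 N (uGame T c) hw0 j i hsympair ∅ (empty_subset _)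
  simpa using this

lemma uGame_singleton_null {θ : Finset ℕ → (Finset ℕ → ℝ) → Finset ℕ → ℝ}
    (hM : IsSynergyMeasure θ) (h6 : NullSynergy θ) {N T : Finset ℕ} (hT : T ⊆ N)
    (hTne : T.Nonempty) (c : ℝ) {j : ℕ} (hjN : j ∈ N) (hjT : j ∉ T) :
    θ N (uGame T c) {j} = 0 := by
  have hw0 : uGame T c ∅ = 0 := uGame_empty hTne c
  have hnull : IsNullPlayer N (uGame T c) j := by
    refine ⟨hjN, fun S hS => ?_⟩
    unfold uGame
    refine if_congr ⟨fun h x hx => ?_, fun h => h.trans (subset_insert j S)⟩ rfl rfl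
    rcases mem_insert.1 (h hx) with h' | h'
    · exact absurd (h' ▸ hx) hjT
    · exact h'
  have := h6 N (uGame T c) hw0 j hnull ∅ (empty_subset _)
  rw [← hM N (uGame T c) hw0]
  simpa using this.symm

lemma uGame_singleton_delta {ψ ψ' : Finset ℕ → (Finset ℕ → ℝ) → Finset ℕ → ℝ}
    (hM : IsSynergyMeasure ψ) (h5 : SymmetricSynergy ψ) (h6 : NullSynergy ψ)
    (h7 : DummySynergy ψ) (h8 : NormalizedSynergy ψ)
    (hM' : IsSynergyMeasure ψ') (h5' : SymmetricSynergy ψ') (h6' : NullSynergy ψ')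
    (h7' : DummySynergy ψ') (h8' : NormalizedSynergy ψ')
    {N T : Finset ℕ} (hT : T ⊆ N) (hTne : T.Nonempty) (c : ℝ) {i : ℕ} (hiN : i ∈ N) :
    ψ N (uGame T c) {i} = ψ' N (uGame T c) {i} := by
  have hw0 : uGame T c ∅ = 0 := uGame_empty hTne c
  by_cases hiT : i ∈ T
  · -- symmetric case
    have hdC : ∀ C ⊆ N, ψ N (uGame T c) C - ψ' N (uGame T c) C
        = ((C ∩ T).card : ℝ) * (ψ N (uGame T c) {i} - ψ' N (uGame T c) {i}) := by
      intro C hC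
      rw [psi_delta_sum hM hM' h7 h7' N (uGame T c) hw0 C hC]
      have hterm : ∀ j ∈ C, ψ N (uGame T c) {j} - ψ' N (uGame T c) {j}
          = if j ∈ T then ψ N (uGame T c) {i} - ψ' N (uGame T c) {i} else 0 := by
        intro j hj
        by_cases hjT : j ∈ T
        · rw [if_pos hjT, uGame_singleton_symm h5 hT c hiT hjT,
            uGame_singleton_symm h5' hT c hiT hjT]
        · rw [if_neg hjT, uGame_singleton_null hM h6 hT hTne c (hC hj) hjT,
            uGame_singleton_null hM' h6' hT hTne c (hC hj) hjT, sub_zero]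
      rw [sum_congr rfl hterm, sum_ite, sum_const_zero, add_zero, sum_const, nsmul_eq_mul,
        filter_mem_eq_inter]
    have hsum : ∑ C ∈ N.powerset, (ψ N (uGame T c) C - ψ' N (uGame T c) C) = 0 := by
      rw [sum_sub_distrib, h8 N (uGame T c) hw0, h8' N (uGame T c) hw0, sub_zero]
    rw [sum_congr rfl (fun C hCp => hdC C (mem_powerset.1 hCp)), ← sum_mul,
      sum_powerset_inter_card N T hT] at hsum
    have hne : (T.card : ℝ) * 2 ^ (N.card - 1) ≠ 0 := by
      have h1 : 0 < T.card := card_pos.2 hTne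
      positivity
    have := mul_eq_zero.1 hsum
    rcases this with h | h
    · exact absurd h hne
    · linarith
  · rw [uGame_singleton_null hM h6 hT hTne c hiN hiT,
      uGame_singleton_null hM' h6' hT hTne c hiN hiT]

/-- the synergy value `χ` is the unique measure of synergy
satisfying P5 (Symmetric-Synergy), P6 (Null-Synergy), P7 (Dummy-Synergy),
P8 (Normalized-Synergy) and P9 (Additive-Synergy). -/
theorem synergyValue_unique_P5_to_P9 :
    (IsSynergyMeasure synergyValue ∧ SymmetricSynergy synergyValue ∧
      NullSynergy synergyValue ∧ DummySynergy synergyValue ∧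
      NormalizedSynergy synergyValue ∧ AdditiveSynergy synergyValue) ∧
    ∀ ψ : Finset ℕ → (Finset ℕ → ℝ) → Finset ℕ → ℝ,
      IsSynergyMeasure ψ → SymmetricSynergy ψ → NullSynergy ψ → DummySynergy ψ →
      NormalizedSynergy ψ → AdditiveSynergy ψ →
      ∀ (N : Finset ℕ) (v : Finset ℕ → ℝ), v ∅ = 0 →
        ∀ C ⊆ N, ψ N v C = synergyValue N v C := by
  refine ⟨⟨chi_measure, chi_symmetric, chi_null, chi_dummy, chi_normalized, chi_additive⟩, ?_⟩
  intro ψ hM h5 h6 h7 h8 h9 N v hv C hC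
  classical
  set cT : Finset ℕ → ℝ := fun T => ∑ R ∈ T.powerset, (-1:ℝ)^(T.card - R.card) * v R with hcT
  set D := N.powerset.erase ∅ with hD
  have hg0 : ∀ T ∈ D, uGame T (cT T) ∅ = 0 := fun T hT =>
    uGame_empty (nonempty_iff_ne_empty.2 (mem_erase.1 hT).1) _
  set vs : Finset ℕ → ℝ := fun S => ∑ T ∈ D, uGame T (cT T) S with hvs
  have hvs0 : vs ∅ = 0 := sum_eq_zero hg0
  set w0 : Finset ℕ → ℝ := fun S => v S - vs S with hw0def
  have hw00 : w0 ∅ = 0 := by rw [hw0def]; dsimp only; rw [hv, hvs0, sub_zero]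
  have hmob : ∀ S ⊆ N, vs S = v S := by
    intro S hS
    have hsplit : uGame ∅ (cT ∅) S + ∑ T ∈ D, uGame T (cT T) S
        = ∑ T ∈ N.powerset, uGame T (cT T) S := by
      rw [hD]
      exact add_sum_erase N.powerset (fun T => uGame T (cT T) S) (empty_mem_powerset N)
    have hz : uGame ∅ (cT ∅) S = 0 := by
      have hg0' : uGame ∅ (cT ∅) S = cT ∅ := if_pos (empty_subset S)
      have hc0 : cT ∅ = 0 := by simp only [hcT]; simp [hv]
      rw [hg0', hc0]
    have hrestrict : ∑ T ∈ S.powerset, uGame T (cT T) S = ∑ T ∈ N.powerset, uGame T (cT T) S :=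
      sum_subset (powerset_mono.2 hS) (fun T _ hTS => if_neg (fun h => hTS (mem_powerset.2 h)))
    have hmobi : ∑ T ∈ S.powerset, uGame T (cT T) S = v S := by
      have hea : ∀ T ∈ S.powerset, uGame T (cT T) S = cT T := fun T hT =>
        if_pos (mem_powerset.1 hT)
      rw [sum_congr rfl hea]
      simp only [hcT]
      exact mobius_inversion v S
    rw [hvs]
    dsimp only
    linarith [hsplit, hz, hrestrict, hmobi]
  have hw0zero : ∀ S ⊆ N, w0 S = 0 := fun S hS => by
    rw [hw0def]; dsimp only; rw [hmob S hS, sub_self]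
  have key : ∀ (θ : Finset ℕ → (Finset ℕ → ℝ) → Finset ℕ → ℝ),
      IsSynergyMeasure θ → NullSynergy θ → AdditiveSynergy θ →
      θ N v C = ∑ T ∈ D, θ N (uGame T (cT T)) C := by
    intro θ hMθ h6θ h9θ
    have hvfun : (fun S => w0 S + vs S) = v := funext fun S => by
      rw [hw0def]; dsimp only; ring
    have hadd := h9θ N w0 vs hw00 hvs0 C hC
    rw [hvfun] at hadd
    rw [← hadd, psi_zero_game hMθ h6θ N w0 hw0zero C hC, zero_add]
    exact psi_sum_family hMθ h9θ N D (fun T => uGame T (cT T)) hg0 C hC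
  rw [key ψ hM h6 h9, key synergyValue chi_measure chi_null chi_additive]
  refine sum_congr rfl fun T hT => ?_
  have hTN : T ⊆ N := mem_powerset.1 (mem_erase.1 hT).2
  have hTne : T.Nonempty := nonempty_iff_ne_empty.2 (mem_erase.1 hT).1
  have hdel := psi_delta_sum hM chi_measure h7 chi_dummy N (uGame T (cT T))
    (uGame_empty hTne _) C hC
  have hzero : ∀ j ∈ C, ψ N (uGame T (cT T)) {j} - synergyValue N (uGame T (cT T)) {j} = 0 :=
    fun j hj => sub_eq_zero.2 (uGame_singleton_delta hM h5 h6 h7 h8 chi_measure chi_symmetric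
      chi_null chi_dummy chi_normalized hTN hTne _ (hC hj))
  rw [sum_eq_zero hzero] at hdel
  linarith
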